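/- Let G = (V,E) be a distance regular graph with shortest-path metric d, let D ≥ 1, and let Q = (q_{xy}) ∈ ℝ^{V×V} be a positive semidefinite matrix satisfying d(x,y)^2 ≤ q_{xx} − 2q_{xy} + q_{yy} ≤ D^2·d(x,y)^2 for all x,y ∈ V. For 0 ≤ i ≤ diam G let M_i = {(x,y) ∈ V×V : d(x,y) = i}, and define Q̄ ∈ ℝ^{V×V} by q̄_{xy} = (1/|M_{d(x,y)}|) · Σ_{(x',y') ∈ M_{d(x,y)}} q_{x'y'}. Then Q̄ is positive semidefinite and satisfies d(x,y)^2 ≤ q̄_{xx} − 2q̄_{xy} + q̄_{yy} ≤ D^2·d(x,y)^2 for all x,y ∈ V. -/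

import Mathlib

open scoped BigOperators

/-- A connected finite graph is distance regular if there are constants
`aᵢ, bᵢ, cᵢ` such that for every pair of vertices at distance `i`, the number of
common neighbours at the prescribed distances are `aᵢ, bᵢ, cᵢ`. -/
def IsDistanceRegular {V : Type*} [Fintype V] (G : SimpleGraph V) : Prop :=
  G.Connected ∧ ∀ i : ℕ, ∃ a b c : ℕ, ∀ x y : V, G.dist x y = i →
    Nat.card {z : V // G.dist x z = 1 ∧ G.dist z y = i} = a ∧
    Nat.card {z : V // G.dist x z = 1 ∧ G.dist z y = i + 1} = b ∧
    Nat.card {z : V // G.dist x z = 1 ∧ G.dist z y = i - 1} = c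

/-- `M i` is the set of ordered pairs of vertices at distance `i`. -/
noncomputable def distPairs {V : Type*} [Fintype V] (G : SimpleGraph V) (i : ℕ) :
    Finset (V × V) :=
  Finset.univ.filter fun p : V × V => G.dist p.1 p.2 = i


section Helpers

set_option linter.unusedSectionVars false

open Finset

variable {V : Type*} [Fintype V] {G : SimpleGraph V}

lemma natCard_eq_filter (P : V → Prop) [DecidablePred P] :
    Nat.card {z : V // P z} = (Finset.univ.filter P).card := by
  rw [Nat.card_eq_fintype_card, Fintype.card_subtype]

lemma exists_nbr (hc : G.Connected) {x y : V} {i : ℕ} (h : G.dist x y = i + 1) :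
    ∃ z : V, G.dist x z = 1 ∧ G.dist z y = i := by
  obtain ⟨p, hp⟩ := SimpleGraph.exists_walk_of_dist_ne_zero (by omega : G.dist x y ≠ 0)
  rw [h] at hp
  cases p with
  | nil => simp at hp
  | cons hadj q =>
    rename_i z
    refine ⟨z, SimpleGraph.dist_eq_one_iff_adj.mpr hadj, ?_⟩
    have h1 : G.dist z y ≤ i := by
      have := SimpleGraph.dist_le q
      simp [SimpleGraph.Walk.length_cons] at hp
      omega
    have h2 : i + 1 ≤ G.dist x z + G.dist z y := h ▸ hc.dist_triangle
    have h3 : G.dist x z = 1 := SimpleGraph.dist_eq_one_iff_adj.mpr hadj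
    omega

noncomputable def sph (G : SimpleGraph V) (x : V) (i : ℕ) : Finset V :=
  Finset.univ.filter fun y => G.dist x y = i

lemma double_count (x : V) (i : ℕ) (b c : ℕ)
    (hb : ∀ z, G.dist x z = i →
      (Finset.univ.filter fun w => G.dist x w = i + 1 ∧ G.dist z w = 1).card = b)
    (hcc : ∀ w, G.dist x w = i + 1 →
      (Finset.univ.filter fun z => G.dist x z = i ∧ G.dist z w = 1).card = c) :
    (sph G x i).card * b = (sph G x (i + 1)).card * c := by
  classical
  have lhs : ∑ z : V, ∑ w : V,
      (if G.dist x z = i ∧ G.dist x w = i + 1 ∧ G.dist z w = 1 then 1 else 0)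
      = (sph G x i).card * b := by
    have h0 : ∀ z : V, (∑ w : V,
        (if G.dist x z = i ∧ G.dist x w = i + 1 ∧ G.dist z w = 1 then 1 else 0))
        = if G.dist x z = i then b else 0 := by
      intro z
      by_cases h : G.dist x z = i
      · rw [if_pos h, ← hb z h, Finset.card_filter]
        exact Finset.sum_congr rfl fun w _ => by simp [h]
      · simp [h]
    rw [Finset.sum_congr rfl fun z _ => h0 z, ← Finset.sum_filter, Finset.sum_const,
      smul_eq_mul]
    rfl
  have rhs : ∑ w : V, ∑ z : V,
      (if G.dist x z = i ∧ G.dist x w = i + 1 ∧ G.dist z w = 1 then 1 else 0)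
      = (sph G x (i + 1)).card * c := by
    have h0 : ∀ w : V, (∑ z : V,
        (if G.dist x z = i ∧ G.dist x w = i + 1 ∧ G.dist z w = 1 then 1 else 0))
        = if G.dist x w = i + 1 then c else 0 := by
      intro w
      by_cases h : G.dist x w = i + 1
      · rw [if_pos h, ← hcc w h, Finset.card_filter]
        exact Finset.sum_congr rfl fun z _ => by
          by_cases h2 : G.dist x z = i ∧ G.dist z w = 1 <;> simp [h, h2]
      · simp [h]
    rw [Finset.sum_congr rfl fun w _ => h0 w, ← Finset.sum_filter, Finset.sum_const,
      smul_eq_mul]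
    rfl
  rw [← lhs, ← rhs, Finset.sum_comm]

lemma sph_card_const (hreg : IsDistanceRegular G) :
    ∀ (i : ℕ) (x y : V), (sph G x i).card = (sph G y i).card := by
  intro i
  induction i with
  | zero =>
    intro x y
    have h : ∀ u : V, sph G u 0 = {u} := by
      intro u
      ext w
      simp [sph, hreg.1.dist_eq_zero_iff, eq_comm]
    rw [h x, h y, Finset.card_singleton, Finset.card_singleton]
  | succ i IH =>
    intro x y
    obtain ⟨a, b, c0, hi⟩ := hreg.2 i
    obtain ⟨a', b', c', hi1⟩ := hreg.2 (i + 1)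
    have hb : ∀ u z : V, G.dist u z = i →
        (Finset.univ.filter fun w => G.dist u w = i + 1 ∧ G.dist z w = 1).card = b := by
      intro u z h
      have h2 := (hi z u (by rwa [SimpleGraph.dist_comm])).2.1
      rw [natCard_eq_filter] at h2
      rw [← h2]
      congr 1
      ext w
      simp only [Finset.mem_filter, Finset.mem_univ, true_and]
      rw [SimpleGraph.dist_comm (u := w) (v := u)]
      tauto
    have hc : ∀ u w : V, G.dist u w = i + 1 →
        (Finset.univ.filter fun z => G.dist u z = i ∧ G.dist z w = 1).card = c' := by
      intro u w h
      have h2 := (hi1 w u (by rwa [SimpleGraph.dist_comm])).2.2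
      rw [natCard_eq_filter] at h2
      rw [← h2]
      congr 1
      ext z
      simp only [Finset.mem_filter, Finset.mem_univ, true_and, Nat.add_sub_cancel]
      rw [SimpleGraph.dist_comm (u := w) (v := z), SimpleGraph.dist_comm (u := z) (v := u)]
      tauto
    have d1 := double_count x i b c' (hb x) (hc x)
    have d2 := double_count y i b c' (hb y) (hc y)
    by_cases hzero : c' = 0
    · have hemp : ∀ u : V, (sph G u (i + 1)).card = 0 := by
        intro u
        rw [Finset.card_eq_zero]
        by_contra hne
        obtain ⟨w, hw⟩ := Finset.nonempty_of_ne_empty hne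
        have hwd : G.dist u w = i + 1 := by simpa [sph] using hw
        obtain ⟨z, hz1, hz2⟩ := exists_nbr hreg.1
          (show G.dist w u = i + 1 by rwa [SimpleGraph.dist_comm])
        have hcard := hc u w hwd
        rw [hzero, Finset.card_eq_zero] at hcard
        have : z ∈ Finset.univ.filter fun z => G.dist u z = i ∧ G.dist z w = 1 := by
          simp only [Finset.mem_filter, Finset.mem_univ, true_and]
          exact ⟨by rwa [SimpleGraph.dist_comm], by rwa [SimpleGraph.dist_comm]⟩
        rw [hcard] at this
        simp at this
      rw [hemp x, hemp y]
    · exact Nat.eq_of_mul_eq_mul_right (Nat.pos_of_ne_zero hzero)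
        (by rw [← d1, ← d2, IH x y])

lemma sum_distPairs_fst (i : ℕ) (F : V → ℝ) :
    ∑ p ∈ distPairs G i, F p.1 = ∑ z : V, ((sph G z i).card : ℝ) * F z := by
  rw [distPairs, Finset.sum_filter, Fintype.sum_prod_type]
  refine Finset.sum_congr rfl fun z _ => ?_
  show (∑ w : V, if G.dist z w = i then F z else 0) = _
  rw [← Finset.sum_filter, Finset.sum_const, nsmul_eq_mul]
  rfl

lemma sum_distPairs_snd (i : ℕ) (F : V → ℝ) :
    ∑ p ∈ distPairs G i, F p.2 = ∑ w : V, ((sph G w i).card : ℝ) * F w := by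
  rw [distPairs, Finset.sum_filter, Fintype.sum_prod_type_right]
  refine Finset.sum_congr rfl fun w _ => ?_
  show (∑ z : V, if G.dist z w = i then F w else 0) = _
  rw [← Finset.sum_filter, Finset.sum_const, nsmul_eq_mul]
  have : (Finset.univ.filter fun z => G.dist z w = i) = sph G w i := by
    ext z; simp [sph, SimpleGraph.dist_comm]
  rw [this]

lemma card_distPairs (i : ℕ) : (distPairs G i).card = ∑ z : V, (sph G z i).card := by
  rw [distPairs, Finset.card_filter, Fintype.sum_prod_type]
  exact Finset.sum_congr rfl fun z _ => by rw [← Finset.card_filter]; rfl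

lemma distPairs_zero_sum (hc : G.Connected) (F : V → V → ℝ) :
    ∑ p ∈ distPairs G 0, F p.1 p.2 = ∑ z : V, F z z := by
  rw [distPairs, Finset.sum_filter, Fintype.sum_prod_type]
  refine Finset.sum_congr rfl fun z _ => ?_
  show (∑ w : V, if G.dist z w = 0 then F z w else 0) = F z z
  rw [Finset.sum_eq_single z]
  · simp [SimpleGraph.dist_self]
  · intro w _ hw
    exact if_neg fun h => hw ((hc.dist_eq_zero_iff).mp h).symm
  · simp

lemma card_distPairs_zero (hc : G.Connected) :
    (distPairs G 0).card = Fintype.card V := by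
  have := distPairs_zero_sum hc (fun _ _ => (1 : ℝ))
  rw [Finset.sum_const, Finset.sum_const, nsmul_eq_mul, nsmul_eq_mul, mul_one, mul_one] at this
  exact_mod_cast this

lemma partA (hreg : IsDistanceRegular G) (D : ℝ) (hD : 1 ≤ D)
    (Q : Matrix V V ℝ)
    (hbound : ∀ x y : V,
      (G.dist x y : ℝ) ^ 2 ≤ Q x x - 2 * Q x y + Q y y ∧
      Q x x - 2 * Q x y + Q y y ≤ D ^ 2 * (G.dist x y : ℝ) ^ 2)
    (Qbar : Matrix V V ℝ)
    (hQbar : ∀ x y : V, Qbar x y =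
      (∑ p ∈ distPairs G (G.dist x y), Q p.1 p.2) / (distPairs G (G.dist x y)).card) :
    ∀ x y : V,
      (G.dist x y : ℝ) ^ 2 ≤ Qbar x x - 2 * Qbar x y + Qbar y y ∧
      Qbar x x - 2 * Qbar x y + Qbar y y ≤ D ^ 2 * (G.dist x y : ℝ) ^ 2 := by
  intro x y
  have hconn := hreg.1
  by_cases hxy : x = y
  · subst hxy
    have h0 : Qbar x x - 2 * Qbar x x + Qbar x x = 0 := by ring
    rw [SimpleGraph.dist_self, h0]
    norm_num
  · set i := G.dist x y with hi
    have hi0 : i ≠ 0 := fun h => hxy (hconn.dist_eq_zero_iff.mp (hi ▸ h))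
    set τ : ℝ := ∑ z : V, Q z z with hτ
    set k : ℕ := (sph G x i).card with hk
    have hkconst : ∀ z : V, (sph G z i).card = k := fun z => sph_card_const hreg i z x
    set n : ℕ := Fintype.card V with hn
    have hxx : Qbar x x = τ / n := by
      rw [hQbar x x, SimpleGraph.dist_self, distPairs_zero_sum hconn Q,
        card_distPairs_zero hconn]
    have hyy : Qbar y y = τ / n := by
      rw [hQbar y y, SimpleGraph.dist_self, distPairs_zero_sum hconn Q,
        card_distPairs_zero hconn]
    have hm : (distPairs G i).card = n * k := by
      rw [card_distPairs, Finset.sum_congr rfl fun z _ => hkconst z, Finset.sum_const,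
        smul_eq_mul, Finset.card_univ]
    have hkpos : 0 < k := Finset.card_pos.mpr ⟨y, by simp [sph, hk, hi]⟩
    have hnpos : 0 < n := Fintype.card_pos_iff.mpr ⟨x⟩
    have hf := sum_distPairs_fst (G := G) i (fun z : V => Q z z)
    have hg := sum_distPairs_snd (G := G) i (fun z : V => Q z z)
    have h5 : ∑ p ∈ distPairs G i, Q p.1 p.1 = k * τ := by
      rw [hf, Finset.sum_congr rfl fun z _ => by rw [hkconst z],
        ← Finset.mul_sum]
    have h6 : ∑ p ∈ distPairs G i, Q p.2 p.2 = k * τ := by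
      rw [hg, Finset.sum_congr rfl fun z _ => by rw [hkconst z],
        ← Finset.mul_sum]
    set m : ℝ := ((distPairs G i).card : ℝ) with hmr
    have hm' : m = (n : ℝ) * k := by rw [hmr, hm]; push_cast; ring
    have hmpos : 0 < m := by
      rw [hm']
      positivity
    have key : Qbar x x - 2 * Qbar x y + Qbar y y
        = (∑ p ∈ distPairs G i, (Q p.1 p.1 - 2 * Q p.1 p.2 + Q p.2 p.2)) / m := by
      have hsum : ∑ p ∈ distPairs G i, (Q p.1 p.1 - 2 * Q p.1 p.2 + Q p.2 p.2)
          = k * τ - 2 * (∑ p ∈ distPairs G i, Q p.1 p.2) + k * τ := by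
        rw [Finset.sum_add_distrib, Finset.sum_sub_distrib, h5, h6, ← Finset.mul_sum]
      rw [hsum, hxx, hyy, hQbar x y, ← hi, ← hmr, hm']
      have hn0 : (n : ℝ) ≠ 0 := by positivity
      have hk0 : (k : ℝ) ≠ 0 := by positivity
      field_simp
    have hdp : ∀ p ∈ distPairs G i, G.dist p.1 p.2 = i := by
      intro p hp
      simpa [distPairs] using hp
    constructor
    · rw [key, le_div_iff₀ hmpos]
      calc (i : ℝ) ^ 2 * m = ∑ _p ∈ distPairs G i, (i : ℝ) ^ 2 := by
            rw [Finset.sum_const, nsmul_eq_mul, hmr]; ring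
        _ ≤ _ := Finset.sum_le_sum fun p hp => by
            have h := (hbound p.1 p.2).1
            rwa [hdp p hp] at h
    · rw [key, div_le_iff₀ hmpos]
      calc ∑ p ∈ distPairs G i, (Q p.1 p.1 - 2 * Q p.1 p.2 + Q p.2 p.2)
          ≤ ∑ _p ∈ distPairs G i, D ^ 2 * (i : ℝ) ^ 2 :=
            Finset.sum_le_sum fun p hp => by
              have h := (hbound p.1 p.2).2
              rwa [hdp p hp] at h
        _ = D ^ 2 * (i : ℝ) ^ 2 * m := by
            rw [Finset.sum_const, nsmul_eq_mul, hmr]; ring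

lemma dist_lt_card [DecidableEq V] (hc : G.Connected) (x y : V) : G.dist x y < Fintype.card V := by
  obtain ⟨p, hp⟩ := hc.exists_walk_length_eq_dist x y
  calc G.dist x y ≤ p.bypass.length := SimpleGraph.dist_le _
    _ < Fintype.card V := p.bypass_isPath.length_lt

lemma conj_mul_conj [DecidableEq V] (U : Matrix V V ℝ) (hU1 : star U * U = 1)
    (e f : V → ℝ) :
    (U * Matrix.diagonal e * star U) * (U * Matrix.diagonal f * star U)
      = U * Matrix.diagonal (fun j => e j * f j) * star U := by
  have : Matrix.diagonal e * Matrix.diagonal f = Matrix.diagonal (fun j => e j * f j) := by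
    rw [Matrix.diagonal_mul_diagonal]
  rw [← this]
  simp only [Matrix.mul_assoc]
  rw [← Matrix.mul_assoc (star U) U, hU1, Matrix.one_mul]

lemma aeval_conj [DecidableEq V] (U : Matrix V V ℝ) (hU1 : star U * U = 1)
    (hU2 : U * star U = 1) (d : V → ℝ) (P : Polynomial ℝ) :
    Polynomial.aeval (U * Matrix.diagonal d * star U) P
      = U * Matrix.diagonal (fun j => P.eval (d j)) * star U := by
  induction P using Polynomial.induction_on with
  | C a =>
    simp only [Polynomial.aeval_C, Polynomial.eval_C]
    have hd : Matrix.diagonal (fun _ : V => a) = a • (1 : Matrix V V ℝ) := by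
      ext i j
      by_cases h : i = j <;>
        simp [Matrix.diagonal_apply, Matrix.one_apply, Matrix.smul_apply, h]
    rw [hd, Matrix.algebraMap_eq_diagonal]
    have : (algebraMap ℝ (V → ℝ)) a = fun _ : V => a := rfl
    rw [this, hd]
    rw [Matrix.mul_smul, Matrix.smul_mul, Matrix.mul_one, hU2]
  | add p q hp hq =>
    simp only [map_add, hp, hq, Polynomial.eval_add]
    rw [← Matrix.add_mul, ← Matrix.mul_add, ← Matrix.diagonal_add]
  | monomial n a ih =>
    have hsplit : Polynomial.C a * Polynomial.X ^ (n + 1)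
        = Polynomial.C a * Polynomial.X ^ n * Polynomial.X := by ring
    simp only [hsplit, map_mul, Polynomial.aeval_X, Polynomial.eval_mul,
      Polynomial.eval_X, ih]
    rw [conj_mul_conj U hU1]

noncomputable def Amat (G : SimpleGraph V) (i : ℕ) : Matrix V V ℝ :=
  Matrix.of fun x y => if G.dist x y = i then 1 else 0

lemma Amat_zero [DecidableEq V] (hc : G.Connected) : Amat G 0 = 1 := by
  ext x y
  by_cases h : x = y <;>
    simp [Amat, Matrix.one_apply, hc.dist_eq_zero_iff, h]

lemma Amat_of_empty {i : ℕ} (h : distPairs G i = ∅) : Amat G i = 0 := by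
  ext x y
  have : G.dist x y ≠ i := by
    intro hd
    have : (x, y) ∈ distPairs G i := by simp [distPairs, hd]
    simp [h] at this
  simp [Amat, this]

lemma mul_Amat_apply (i : ℕ) (x y : V) :
    (Amat G 1 * Amat G i) x y
      = ((Finset.univ.filter fun z => G.dist x z = 1 ∧ G.dist z y = i).card : ℝ) := by
  rw [Matrix.mul_apply, Finset.card_filter]
  push_cast
  refine Finset.sum_congr rfl fun z _ => ?_
  by_cases h1 : G.dist x z = 1 <;> by_cases h2 : G.dist z y = i <;> simp [Amat, h1, h2]

lemma Amat_rec (hreg : IsDistanceRegular G) (i : ℕ) :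
    ∃ β γ δ : ℕ,
      Amat G 1 * Amat G (i + 1)
        = (β : ℝ) • Amat G i + (γ : ℝ) • Amat G (i + 1) + (δ : ℝ) • Amat G (i + 2) ∧
      ((distPairs G (i + 2)).Nonempty → δ ≠ 0) := by
  classical
  obtain ⟨a1, b1, c1, h1⟩ := hreg.2 i
  obtain ⟨a2, b2, c2, h2⟩ := hreg.2 (i + 1)
  obtain ⟨a3, b3, c3, h3⟩ := hreg.2 (i + 2)
  refine ⟨b1, a2, c3, ?_, ?_⟩
  · ext x y
    rw [mul_Amat_apply]
    simp only [Matrix.add_apply, Matrix.smul_apply, Amat, Matrix.of_apply, smul_eq_mul,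
      mul_ite, mul_one, mul_zero]
    rcases eq_or_ne (G.dist x y) i with hk | hk1
    · have := (h1 x y hk).2.1
      rw [natCard_eq_filter] at this
      rw [if_pos hk, if_neg (by omega), if_neg (by omega), this]
      ring
    rcases eq_or_ne (G.dist x y) (i + 1) with hk | hk2
    · have := (h2 x y hk).1
      rw [natCard_eq_filter] at this
      rw [if_pos hk, if_neg (by omega), if_neg (by omega), this]
      ring
    rcases eq_or_ne (G.dist x y) (i + 2) with hk | hk3
    · have := (h3 x y hk).2.2
      rw [show i + 2 - 1 = i + 1 from rfl, natCard_eq_filter] at this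
      rw [if_pos hk, if_neg (by omega), if_neg (by omega), this]
      ring
    · have hempty : (Finset.univ.filter fun z => G.dist x z = 1 ∧ G.dist z y = i + 1) = ∅ := by
        rw [Finset.filter_eq_empty_iff]
        rintro z - ⟨hz1, hz2⟩
        have t1 : G.dist x y ≤ G.dist x z + G.dist z y := hreg.1.dist_triangle
        have t2 : G.dist z y ≤ G.dist z x + G.dist x y := hreg.1.dist_triangle
        rw [SimpleGraph.dist_comm (u := z) (v := x)] at t2
        omega
      rw [hempty, if_neg hk1, if_neg hk2, if_neg hk3]
      simp
  · rintro ⟨p, hp⟩ hc0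
    have hpd : G.dist p.1 p.2 = i + 2 := by simpa [distPairs] using hp
    obtain ⟨z, hz1, hz2⟩ := exists_nbr hreg.1 hpd
    have := (h3 p.1 p.2 hpd).2.2
    rw [hc0] at this
    have hpos : 0 < Nat.card {z : V // G.dist p.1 z = 1 ∧ G.dist z p.2 = i + 2 - 1} := by
      have : Nonempty {z : V // G.dist p.1 z = 1 ∧ G.dist z p.2 = i + 2 - 1} :=
        ⟨⟨z, hz1, by simpa using hz2⟩⟩
      exact Nat.card_pos
    omega

section conjhelpers
variable [DecidableEq V]

lemma conj_smul (U : Matrix V V ℝ) (a : ℝ) (d : V → ℝ) :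
    a • (U * Matrix.diagonal d * star U)
      = U * Matrix.diagonal (fun j => a * d j) * star U := by
  rw [show (fun j => a * d j) = a • d from rfl, Matrix.diagonal_smul, Matrix.mul_smul,
    Matrix.smul_mul]

lemma conj_sub (U : Matrix V V ℝ) (d e : V → ℝ) :
    U * Matrix.diagonal d * star U - U * Matrix.diagonal e * star U
      = U * Matrix.diagonal (fun j => d j - e j) * star U := by
  rw [← Matrix.sub_mul, ← Matrix.mul_sub, Matrix.diagonal_sub]

lemma diag_sum (s : Finset ℕ) (d : ℕ → V → ℝ) :
    ∑ i ∈ s, Matrix.diagonal (d i) = Matrix.diagonal (fun j => ∑ i ∈ s, d i j) := by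
  ext x y
  by_cases h : x = y <;> simp [Matrix.sum_apply, Matrix.diagonal_apply, h]

lemma conj_sum (U : Matrix V V ℝ) (s : Finset ℕ) (d : ℕ → V → ℝ) :
    ∑ i ∈ s, U * Matrix.diagonal (d i) * star U
      = U * Matrix.diagonal (fun j => ∑ i ∈ s, d i j) * star U := by
  rw [← diag_sum]
  rw [Finset.sum_congr rfl fun i _ => Matrix.mul_assoc U (Matrix.diagonal (d i)) (star U),
    ← Matrix.mul_sum, ← Finset.sum_mul, Matrix.mul_assoc]

end conjhelpers

lemma partB [DecidableEq V] (hreg : IsDistanceRegular G)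
    (Q : Matrix V V ℝ) (hQ : Q.PosSemidef)
    (Qbar : Matrix V V ℝ)
    (hQbar : ∀ x y : V, Qbar x y =
      (∑ p ∈ distPairs G (G.dist x y), Q p.1 p.2) / (distPairs G (G.dist x y)).card) :
    Qbar.PosSemidef := by
  have hconn := hreg.1
  set W : Submodule ℝ (Matrix V V ℝ) := Submodule.span ℝ (Set.range (Amat G)) with hW
  have hmem : ∀ i, Amat G i ∈ W := fun i => Submodule.subset_span ⟨i, rfl⟩
  have hmulW : ∀ B ∈ W, Amat G 1 * B ∈ W := by
    intro B hB
    induction hB using Submodule.span_induction with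
    | mem B hB =>
      obtain ⟨i, rfl⟩ := hB
      cases i with
      | zero => rw [Amat_zero hconn, mul_one]; exact hmem 1
      | succ i =>
        obtain ⟨β, γ, δ, heq, -⟩ := Amat_rec hreg i
        rw [heq]
        exact add_mem (add_mem (Submodule.smul_mem _ _ (hmem i))
          (Submodule.smul_mem _ _ (hmem (i + 1)))) (Submodule.smul_mem _ _ (hmem (i + 2)))
    | zero => rw [mul_zero]; exact zero_mem _
    | add a b ha hb iha ihb => rw [mul_add]; exact add_mem iha ihb
    | smul c a ha iha => rw [mul_smul_comm]; exact Submodule.smul_mem _ _ iha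
  have hpow : ∀ k : ℕ, Amat G 1 ^ k ∈ W := by
    intro k
    induction k with
    | zero => rw [pow_zero, ← Amat_zero hconn]; exact hmem 0
    | succ k ih => rw [pow_succ']; exact hmulW _ ih
  have haeval : ∀ P : Polynomial ℝ, Polynomial.aeval (Amat G 1) P ∈ W := by
    intro P
    rw [Polynomial.aeval_eq_sum_range]
    exact Submodule.sum_mem _ fun k _ => Submodule.smul_mem _ _ (hpow k)
  have hTA : ∀ i, Matrix.trace ((Q - Qbar) * Amat G i) = 0 := by
    intro i
    have hexp : Matrix.trace ((Q - Qbar) * Amat G i)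
        = ∑ p ∈ distPairs G i, (Q p.1 p.2 - Qbar p.1 p.2) := by
      rw [distPairs, Finset.sum_filter, Fintype.sum_prod_type, Matrix.trace]
      refine Finset.sum_congr rfl fun x _ => ?_
      rw [Matrix.diag_apply, Matrix.mul_apply]
      refine Finset.sum_congr rfl fun y _ => ?_
      by_cases h : G.dist x y = i
      · rw [if_pos h]
        have h' : G.dist y x = i := by rwa [SimpleGraph.dist_comm]
        simp [Amat, h', Matrix.sub_apply]
      · rw [if_neg h]
        have h' : G.dist y x ≠ i := by rwa [SimpleGraph.dist_comm]
        simp [Amat, h', Matrix.sub_apply]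
    rw [hexp]
    by_cases hne : (distPairs G i).Nonempty
    · have hc0 : ((distPairs G i).card : ℝ) ≠ 0 := by
        have := Finset.card_pos.mpr hne
        positivity
      have hQb : ∀ p ∈ distPairs G i, Qbar p.1 p.2
          = (∑ q ∈ distPairs G i, Q q.1 q.2) / (distPairs G i).card := by
        intro p hp
        have hd : G.dist p.1 p.2 = i := by simpa [distPairs] using hp
        rw [hQbar p.1 p.2, hd]
      rw [Finset.sum_sub_distrib, Finset.sum_congr rfl hQb, Finset.sum_const, nsmul_eq_mul]
      field_simp
      ring
    · rw [Finset.not_nonempty_iff_eq_empty.mp hne]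
      simp
  have hT : ∀ B ∈ W, Matrix.trace ((Q - Qbar) * B) = 0 := by
    intro B hB
    induction hB using Submodule.span_induction with
    | mem B hB => obtain ⟨i, rfl⟩ := hB; exact hTA i
    | zero => simp
    | add a b ha hb iha ihb => rw [mul_add, Matrix.trace_add, iha, ihb, add_zero]
    | smul c a ha iha => rw [mul_smul_comm, Matrix.trace_smul, iha, smul_zero]
  have hH : (Amat G 1).IsHermitian := by
    ext x y
    rw [Matrix.conjTranspose_apply, star_trivial]
    show (if G.dist y x = 1 then (1:ℝ) else 0) = (if G.dist x y = 1 then (1:ℝ) else 0)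
    rw [SimpleGraph.dist_comm]
  set U : Matrix V V ℝ := (Matrix.IsHermitian.eigenvectorUnitary hH : Matrix V V ℝ)
    with hUdef
  set μ : V → ℝ := hH.eigenvalues with hμ
  have hUmem := (Matrix.IsHermitian.eigenvectorUnitary hH).2
  rw [Unitary.mem_iff] at hUmem
  obtain ⟨hU1, hU2⟩ := hUmem
  rw [← hUdef] at hU1 hU2
  have hsp : Amat G 1 = U * Matrix.diagonal μ * star U := by
    have := hH.spectral_theorem
    rwa [Unitary.conjStarAlgAut_apply, RCLike.ofReal_real_eq_id,
        Function.id_comp] at this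
  have hDg : ∀ i : ℕ,
      ∃ ψ : ℝ → ℝ, Amat G i = U * Matrix.diagonal (fun j => ψ (μ j)) * star U := by
    have base0 : Amat G 0 = U * Matrix.diagonal (fun _ : V => (1 : ℝ)) * star U := by
      rw [Amat_zero hconn, show Matrix.diagonal (fun _ : V => (1:ℝ)) = 1 from Matrix.diagonal_one,
        Matrix.mul_one, hU2]
    have hpair : ∀ i : ℕ,
        (∃ ψ : ℝ → ℝ, Amat G i = U * Matrix.diagonal (fun j => ψ (μ j)) * star U) ∧
        (∃ ψ : ℝ → ℝ, Amat G (i + 1) = U * Matrix.diagonal (fun j => ψ (μ j)) * star U) := by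
      intro i
      induction i with
      | zero => exact ⟨⟨fun _ => 1, base0⟩, ⟨fun t => t, hsp⟩⟩
      | succ i ih =>
        obtain ⟨⟨ψ0, hψ0⟩, ⟨ψ1, hψ1⟩⟩ := ih
        refine ⟨⟨ψ1, hψ1⟩, ?_⟩
        obtain ⟨β, γ, δ, heq, hδ⟩ := Amat_rec hreg i
        by_cases hne : (distPairs G (i + 2)).Nonempty
        · have hδ0 : (δ : ℝ) ≠ 0 := Nat.cast_ne_zero.mpr (hδ hne)
          refine ⟨fun t => (t * ψ1 t - β * ψ0 t - γ * ψ1 t) / δ, ?_⟩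
          have h2 : (δ : ℝ) • Amat G (i + 2)
              = Amat G 1 * Amat G (i + 1) - (β : ℝ) • Amat G i - (γ : ℝ) • Amat G (i + 1) := by
            rw [heq]; abel
          have h3 : Amat G (i + 2) = (δ : ℝ)⁻¹ •
              (Amat G 1 * Amat G (i + 1) - (β : ℝ) • Amat G i
                - (γ : ℝ) • Amat G (i + 1)) := by
            rw [← h2, smul_smul, inv_mul_cancel₀ hδ0, one_smul]
          rw [h3, hψ0, hψ1, hsp, conj_mul_conj U hU1, conj_smul, conj_smul, conj_sub,
            conj_sub, conj_smul]
          congr 1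
          congr 1
          funext j
          field_simp
          simp only [mul_comm (ψ1 _) (γ : ℝ)]
        · have hemp : distPairs G (i + 2) = ∅ := Finset.not_nonempty_iff_eq_empty.mp hne
          refine ⟨fun _ => 0, ?_⟩
          rw [Amat_of_empty hemp]
          rw [show Matrix.diagonal (fun _ : V => (0:ℝ)) = 0 from Matrix.diagonal_zero]
          rw [Matrix.mul_zero, Matrix.zero_mul]
    exact fun i => (hpair i).1
  set g : ℕ → ℝ := fun i => (∑ p ∈ distPairs G i, Q p.1 p.2) / (distPairs G i).card with hg
  set n : ℕ := Fintype.card V with hn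
  have hQbarA : Qbar = ∑ i ∈ Finset.range n, g i • Amat G i := by
    ext x y
    rw [Matrix.sum_apply]
    simp only [Matrix.smul_apply, Amat, Matrix.of_apply, smul_eq_mul, mul_ite, mul_one,
      mul_zero]
    rw [Finset.sum_ite_eq (Finset.range n) (G.dist x y) g,
      if_pos (Finset.mem_range.mpr (dist_lt_card hconn x y)), hQbar x y]
  set Ψ : ℕ → ℝ → ℝ := fun i => Classical.choose (hDg i) with hΨdef
  have hΨ : ∀ i, Amat G i = U * Matrix.diagonal (fun j => Ψ i (μ j)) * star U :=
    fun i => Classical.choose_spec (hDg i)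
  set f : ℝ → ℝ := fun t => ∑ i ∈ Finset.range n, g i * Ψ i t with hf
  have hQbarDg : Qbar = U * Matrix.diagonal (fun j => f (μ j)) * star U := by
    rw [hQbarA, Finset.sum_congr rfl fun i _ => by rw [hΨ i, conj_smul], conj_sum]
  have hfpos : ∀ j₀ : V, 0 ≤ f (μ j₀) := by
    intro j₀
    set t : ℝ := μ j₀ with ht
    set s : Finset ℝ := Finset.image μ Finset.univ with hs
    have hts : t ∈ s := Finset.mem_image_of_mem μ (Finset.mem_univ j₀)
    set P : Polynomial ℝ := Lagrange.interpolate s id (fun r => if r = t then 1 else 0)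
      with hP
    have hPeval : ∀ r ∈ s, P.eval r = if r = t then 1 else 0 := fun r hr =>
      Lagrange.eval_interpolate_at_node _ (Set.injOn_id _) hr
    set χ : V → ℝ := fun j => if μ j = t then 1 else 0 with hχ
    have hEχ : Polynomial.aeval (Amat G 1) P = U * Matrix.diagonal χ * star U := by
      rw [hsp, aeval_conj U hU1 hU2]
      have : (fun j => P.eval (μ j)) = χ :=
        funext fun j => hPeval (μ j) (Finset.mem_image_of_mem μ (Finset.mem_univ j))
      rw [this]
    have htrQbar : Matrix.trace (Qbar * Polynomial.aeval (Amat G 1) P)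
        = ((Finset.univ.filter fun j => μ j = t).card : ℝ) * f t := by
      rw [hQbarDg, hEχ, conj_mul_conj U hU1, Matrix.trace_mul_cycle, hU1, Matrix.one_mul,
        Matrix.trace_diagonal]
      simp only [hχ, mul_ite, mul_one, mul_zero]
      rw [← Finset.sum_filter,
        Finset.sum_congr rfl fun j hj => by rw [(Finset.mem_filter.mp hj).2],
        Finset.sum_const, nsmul_eq_mul]
    have htr0 := hT _ (haeval P)
    rw [Matrix.sub_mul, Matrix.trace_sub, sub_eq_zero] at htr0
    have htrnonneg : 0 ≤ Matrix.trace (Q * Polynomial.aeval (Amat G 1) P) := by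
      have hχχ : ∀ j, χ j * χ j = χ j := by
        intro j
        by_cases h : μ j = t <;> simp [hχ, h]
      have hCC : Polynomial.aeval (Amat G 1) P
          = (U * Matrix.diagonal χ) * star (U * Matrix.diagonal χ) := by
        rw [star_mul, Matrix.star_eq_conjTranspose (Matrix.diagonal χ),
          Matrix.diagonal_conjTranspose]
        have hstar : star χ = χ := by funext j; simp [hχ]
        rw [hstar, hEχ]
        have hDD : Matrix.diagonal χ * Matrix.diagonal χ = Matrix.diagonal χ := by
          rw [Matrix.diagonal_mul_diagonal]
          exact congrArg Matrix.diagonal (funext hχχ)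
        calc U * Matrix.diagonal χ * star U
            = U * (Matrix.diagonal χ * Matrix.diagonal χ) * star U := by rw [hDD]
          _ = U * Matrix.diagonal χ * (Matrix.diagonal χ * star U) := by
              simp only [Matrix.mul_assoc]
      rw [hCC, ← Matrix.mul_assoc, Matrix.trace_mul_cycle]
      set C : Matrix V V ℝ := U * Matrix.diagonal χ with hC
      rw [Matrix.trace]
      refine Finset.sum_nonneg fun j _ => ?_
      have h := hQ.dotProduct_mulVec_nonneg (fun x => C x j)
      have hentry : (star C * Q * C) j j
          = dotProduct (star fun x => C x j) (Q.mulVec fun x => C x j) := by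
        calc (star C * Q * C) j j
            = ∑ x, (∑ y, (star C) j y * Q y x) * C x j := by
              rw [Matrix.mul_apply]
              exact Finset.sum_congr rfl fun x _ => by rw [Matrix.mul_apply]
          _ = ∑ x, ∑ y, C y j * Q y x * C x j := by
              refine Finset.sum_congr rfl fun x _ => ?_
              rw [Finset.sum_mul]
              exact Finset.sum_congr rfl fun y _ => by
                rw [Matrix.star_apply, star_trivial]
          _ = ∑ y, ∑ x, C y j * Q y x * C x j := Finset.sum_comm
          _ = dotProduct (star fun x => C x j) (Q.mulVec fun x => C x j) := by
              rw [dotProduct]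
              refine Finset.sum_congr rfl fun y _ => ?_
              rw [Pi.star_apply, star_trivial, Matrix.mulVec, dotProduct,
                Finset.mul_sum]
              exact Finset.sum_congr rfl fun x _ => by ring
      rw [Matrix.diag_apply, hentry]
      exact h
    have hcard : 0 < ((Finset.univ.filter fun j => μ j = t).card : ℝ) := by
      have : j₀ ∈ Finset.univ.filter fun j => μ j = t := by simp [ht]
      have := Finset.card_pos.mpr ⟨j₀, this⟩
      exact_mod_cast this
    have := htrQbar ▸ htr0 ▸ htrnonneg
    nlinarith
  rw [hQbarDg, Matrix.star_eq_conjTranspose]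
  exact (Matrix.PosSemidef.diagonal fun j => hfpos j).mul_mul_conjTranspose_same U

end Helpers

theorem stmt3 {V : Type*} [Fintype V] (G : SimpleGraph V)
    (hreg : IsDistanceRegular G) (D : ℝ) (hD : 1 ≤ D)
    (Q : Matrix V V ℝ) (hQ : Q.PosSemidef)
    (hbound : ∀ x y : V,
      (G.dist x y : ℝ) ^ 2 ≤ Q x x - 2 * Q x y + Q y y ∧
      Q x x - 2 * Q x y + Q y y ≤ D ^ 2 * (G.dist x y : ℝ) ^ 2)
    (Qbar : Matrix V V ℝ)
    (hQbar : ∀ x y : V, Qbar x y =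
      (∑ p ∈ distPairs G (G.dist x y), Q p.1 p.2) / (distPairs G (G.dist x y)).card) :
    Qbar.PosSemidef ∧
      ∀ x y : V,
        (G.dist x y : ℝ) ^ 2 ≤ Qbar x x - 2 * Qbar x y + Qbar y y ∧
        Qbar x x - 2 * Qbar x y + Qbar y y ≤ D ^ 2 * (G.dist x y : ℝ) ^ 2 := by
  classical
  exact ⟨partB hreg Q hQ Qbar hQbar, partA hreg D hD Q hbound Qbar hQbar⟩
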